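/- Convergence of the smoothed policy-evaluation iteration: for any zero-sum Markov game with finite nonempty S, A, U, any protagonist policy π, adversarial policy μ, transition model p, reward r, discount γ ∈ [0,1), and any ρ > 0, if v_ρ^π is a fixed point of T̃^π and V_0 : S → ℝ is arbitrary, then the iterates V_{j+1} = T̃^π V_j satisfy ‖V_j − v_ρ^π‖_∞ → 0 as j → ∞; indeed ‖V_j − v_ρ^π‖_∞ ≤ γ^j · ‖V_0 − v_ρ^π‖_∞ for all j. -/

import Mathlib

open Finset

/-- The ∞-norm of a function on a finite nonempty state space: `‖V‖_∞ = max_s |V s|`. -/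
noncomputable def normInf {S : Type*} [Fintype S] [Nonempty S] (V : S → ℝ) : ℝ :=
  Finset.univ.sup' Finset.univ_nonempty (fun s => |V s|)

/-- The smoothing worst-case Bellman operator
`(T̃^π V)(s) = (1/ρ) log ∑_u μ(u|s) exp (ρ ∑_a π(a|s) ∑_{s'} p(s'|s,a,u) (r(s,a,u) + γ V(s')))`. -/
noncomputable def smoothBellman {S A U : Type*} [Fintype S] [Fintype A] [Fintype U]
    (ρ γ : ℝ) (π : S → A → ℝ) (μ : S → U → ℝ) (p : S → A → U → S → ℝ)
    (r : S → A → U → ℝ) (V : S → ℝ) : S → ℝ :=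
  fun s => (1 / ρ) * Real.log (∑ u, μ s u *
    Real.exp (ρ * ∑ a, π s a * ∑ s', p s a u s' * (r s a u + γ * V s')))

/-- The worst-case Bellman operator
`(T^π V)(s) = max_u ∑_a π(a|s) ∑_{s'} p(s'|s,a,u) (r(s,a,u) + γ V(s'))`. -/
noncomputable def worstBellman {S A U : Type*} [Fintype S] [Fintype A] [Fintype U]
    [Nonempty U] (γ : ℝ) (π : S → A → ℝ) (p : S → A → U → S → ℝ)
    (r : S → A → U → ℝ) (V : S → ℝ) : S → ℝ :=
  fun s => Finset.univ.sup' Finset.univ_nonempty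
    (fun u => ∑ a, π s a * ∑ s', p s a u s' * (r s a u + γ * V s'))

lemma abs_le_normInf {S : Type*} [Fintype S] [Nonempty S] (V : S → ℝ) (s : S) :
    |V s| ≤ normInf V := Finset.le_sup' (fun t => |V t|) (Finset.mem_univ s)

lemma normInf_nonneg {S : Type*} [Fintype S] [Nonempty S] (V : S → ℝ) : 0 ≤ normInf V := by
  obtain ⟨s⟩ := ‹Nonempty S›
  exact le_trans (abs_nonneg (V s)) (abs_le_normInf V s)

lemma normInf_le {S : Type*} [Fintype S] [Nonempty S] (V : S → ℝ) (c : ℝ)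
    (h : ∀ s, |V s| ≤ c) : normInf V ≤ c :=
  Finset.sup'_le _ _ fun s _ => h s

lemma lse_shift_le {U : Type*} [Fintype U] (μ : U → ℝ) (hμ0 : ∀ u, 0 ≤ μ u)
    (hμ1 : ∑ u, μ u = 1) (ρ : ℝ) (hρ : 0 < ρ) (x y : U → ℝ) (c : ℝ)
    (h : ∀ u, x u ≤ y u + c) :
    (1/ρ) * Real.log (∑ u, μ u * Real.exp (ρ * x u)) ≤
    (1/ρ) * Real.log (∑ u, μ u * Real.exp (ρ * y u)) + c := by
  have hex : ∃ u, 0 < μ u := by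
    by_contra h'
    push_neg at h'
    have : ∑ u, μ u = 0 := Finset.sum_eq_zero fun u _ => le_antisymm (h' u) (hμ0 u)
    rw [this] at hμ1; norm_num at hμ1
  obtain ⟨u0, hu0⟩ := hex
  have hpos : ∀ z : U → ℝ, 0 < ∑ u, μ u * Real.exp (ρ * z u) := fun z =>
    Finset.sum_pos' (fun u _ => mul_nonneg (hμ0 u) (Real.exp_pos _).le)
      ⟨u0, Finset.mem_univ u0, mul_pos hu0 (Real.exp_pos _)⟩
  have hle : (∑ u, μ u * Real.exp (ρ * x u)) ≤
      (∑ u, μ u * Real.exp (ρ * y u)) * Real.exp (ρ * c) := by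
    rw [Finset.sum_mul]
    refine Finset.sum_le_sum fun u _ => ?_
    rw [mul_assoc, ← Real.exp_add]
    refine mul_le_mul_of_nonneg_left (Real.exp_le_exp.2 ?_) (hμ0 u)
    nlinarith [h u]
  have hlog := Real.log_le_log (hpos x) hle
  rw [Real.log_mul (ne_of_gt (hpos y)) (Real.exp_ne_zero _), Real.log_exp] at hlog
  have h1ρ : (0:ℝ) < 1/ρ := by positivity
  calc (1/ρ) * Real.log (∑ u, μ u * Real.exp (ρ * x u))
      ≤ (1/ρ) * (Real.log (∑ u, μ u * Real.exp (ρ * y u)) + ρ * c) :=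
        mul_le_mul_of_nonneg_left hlog h1ρ.le
    _ = (1/ρ) * Real.log (∑ u, μ u * Real.exp (ρ * y u)) + c := by
        field_simp

lemma normInf_sub_comm {S : Type*} [Fintype S] [Nonempty S] (V W : S → ℝ) :
    normInf (fun s => V s - W s) = normInf (fun s => W s - V s) := by
  unfold normInf
  congr 1
  ext s
  exact abs_sub_comm _ _

lemma smoothBellman_contraction {S A U : Type*}
    [Fintype S] [Fintype A] [Fintype U] [Nonempty S] [Nonempty A] [Nonempty U]
    (π : S → A → ℝ) (hπ0 : ∀ s a, 0 ≤ π s a) (hπ1 : ∀ s, ∑ a, π s a = 1)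
    (μ : S → U → ℝ) (hμ0 : ∀ s u, 0 ≤ μ s u) (hμ1 : ∀ s, ∑ u, μ s u = 1)
    (p : S → A → U → S → ℝ) (hp0 : ∀ s a u s', 0 ≤ p s a u s')
    (hp1 : ∀ s a u, ∑ s', p s a u s' = 1)
    (r : S → A → U → ℝ) (γ : ℝ) (hγ0 : 0 ≤ γ)
    (ρ : ℝ) (hρ : 0 < ρ) (V W : S → ℝ) :
    normInf (fun s => smoothBellman ρ γ π μ p r V s - smoothBellman ρ γ π μ p r W s) ≤
      γ * normInf (fun s => V s - W s) := by
  have key : ∀ (V W : S → ℝ) (s : S),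
      smoothBellman ρ γ π μ p r V s ≤ smoothBellman ρ γ π μ p r W s +
        γ * normInf (fun t => V t - W t) := by
    intro V W s
    set c := γ * normInf (fun t => V t - W t) with hc
    have hBu : ∀ u, (∑ a, π s a * ∑ s', p s a u s' * (r s a u + γ * V s')) ≤
        (∑ a, π s a * ∑ s', p s a u s' * (r s a u + γ * W s')) + c := by
      intro u
      have keya : ∀ a, (∑ s', p s a u s' * (r s a u + γ * V s')) ≤
          (∑ s', p s a u s' * (r s a u + γ * W s')) + c := by
        intro a
        have hdiff : (∑ s', p s a u s' * (r s a u + γ * V s')) -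
            (∑ s', p s a u s' * (r s a u + γ * W s')) =
            ∑ s', p s a u s' * (γ * (V s' - W s')) := by
          rw [← Finset.sum_sub_distrib]
          exact Finset.sum_congr rfl fun s' _ => by ring
        have hb : ∑ s', p s a u s' * (γ * (V s' - W s')) ≤ c := by
          calc ∑ s', p s a u s' * (γ * (V s' - W s'))
              ≤ ∑ s', p s a u s' * c := by
                refine Finset.sum_le_sum fun s' _ => ?_
                refine mul_le_mul_of_nonneg_left ?_ (hp0 s a u s')
                have h1 := (abs_le.mp (abs_le_normInf (fun t => V t - W t) s')).2
                rw [hc]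
                nlinarith
            _ = c := by rw [← Finset.sum_mul, hp1 s a u, one_mul]
        linarith
      calc (∑ a, π s a * ∑ s', p s a u s' * (r s a u + γ * V s'))
          ≤ ∑ a, π s a * ((∑ s', p s a u s' * (r s a u + γ * W s')) + c) :=
            Finset.sum_le_sum fun a _ =>
              mul_le_mul_of_nonneg_left (keya a) (hπ0 s a)
        _ = (∑ a, π s a * ∑ s', p s a u s' * (r s a u + γ * W s')) + c := by
            simp only [mul_add, Finset.sum_add_distrib, ← Finset.sum_mul, hπ1 s, one_mul]
    exact lse_shift_le (μ s) (hμ0 s) (hμ1 s) ρ hρ _ _ c hBu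
  refine normInf_le _ _ fun s => abs_le.2 ⟨?_, ?_⟩
  · have h2 := key W V s
    rw [normInf_sub_comm W V] at h2
    linarith
  · have h1 := key V W s
    linarith

/-- Convergence of the smoothed policy-evaluation iteration: if `v` is a fixed point of
`T̃^π` and `V_j = (T̃^π)^[j] V_0`, then `‖V_j − v‖_∞ ≤ γ^j ‖V_0 − v‖_∞` for all `j`,
and `‖V_j − v‖_∞ → 0` as `j → ∞`. -/
theorem smoothBellman_iterates_converge {S A U : Type*}
    [Fintype S] [Fintype A] [Fintype U] [Nonempty S] [Nonempty A] [Nonempty U]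
    (π : S → A → ℝ) (hπ0 : ∀ s a, 0 ≤ π s a) (hπ1 : ∀ s, ∑ a, π s a = 1)
    (μ : S → U → ℝ) (hμ0 : ∀ s u, 0 ≤ μ s u) (hμ1 : ∀ s, ∑ u, μ s u = 1)
    (p : S → A → U → S → ℝ) (hp0 : ∀ s a u s', 0 ≤ p s a u s')
    (hp1 : ∀ s a u, ∑ s', p s a u s' = 1)
    (r : S → A → U → ℝ) (γ : ℝ) (hγ0 : 0 ≤ γ) (hγ1 : γ < 1)
    (ρ : ℝ) (hρ : 0 < ρ)
    (v : S → ℝ) (hv : smoothBellman ρ γ π μ p r v = v) (V₀ : S → ℝ) :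
    (∀ j : ℕ,
      normInf (fun s => (smoothBellman ρ γ π μ p r)^[j] V₀ s - v s) ≤
        γ ^ j * normInf (fun s => V₀ s - v s)) ∧
    Filter.Tendsto
      (fun j : ℕ => normInf (fun s => (smoothBellman ρ γ π μ p r)^[j] V₀ s - v s))
      Filter.atTop (nhds 0) := by
  set T := smoothBellman ρ γ π μ p r with hT
  have hbound : ∀ j : ℕ,
      normInf (fun s => T^[j] V₀ s - v s) ≤ γ ^ j * normInf (fun s => V₀ s - v s) := by
    intro j
    induction j with
    | zero => simp
    | succ j ih =>
      have step : normInf (fun s => T^[j+1] V₀ s - v s) ≤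
          γ * normInf (fun s => T^[j] V₀ s - v s) := by
        have := smoothBellman_contraction π hπ0 hπ1 μ hμ0 hμ1 p hp0 hp1 r γ hγ0 ρ hρ
          (T^[j] V₀) v
        rw [← hT, hv] at this
        simpa [Function.iterate_succ_apply'] using this
      calc normInf (fun s => T^[j+1] V₀ s - v s)
          ≤ γ * normInf (fun s => T^[j] V₀ s - v s) := step
        _ ≤ γ * (γ ^ j * normInf (fun s => V₀ s - v s)) :=
            mul_le_mul_of_nonneg_left ih hγ0
        _ = γ ^ (j+1) * normInf (fun s => V₀ s - v s) := by ring
  refine ⟨hbound, ?_⟩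
  have hγpow : Filter.Tendsto (fun j : ℕ => γ ^ j * normInf (fun s => V₀ s - v s))
      Filter.atTop (nhds 0) := by
    have := tendsto_pow_atTop_nhds_zero_of_lt_one hγ0 hγ1
    simpa using this.mul_const (normInf (fun s => V₀ s - v s))
  exact squeeze_zero (fun j => normInf_nonneg _) hbound hγpow
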